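/- Let F₀ be a real number with F₀ ≥ 2/3 (and F₀ ≤ 1), let 0 < ε < 1/2, and define the purification fidelity sequence by F_n = F_{n-1}² / (F_{n-1}² + (1 - F_{n-1})²) for n ≥ 1. Then for every natural number m with m ≥ log₂(log₂(1/ε)) one has F_m > 1 - ε. -/

import Mathlib

/-- If the initial fidelity is at least `2/3`, then after any
`m ≥ log₂ log₂ (1/ε)` purification repetitions the fidelity exceeds `1 - ε`. -/
theorem purification_accuracy (F : ℕ → ℝ) (ε : ℝ)
    (h0 : 2 / 3 ≤ F 0) (h1 : F 0 ≤ 1)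
    (hε0 : 0 < ε) (hε1 : ε < 1 / 2)
    (hrec : ∀ n : ℕ, F (n + 1) = (F n) ^ 2 / ((F n) ^ 2 + (1 - F n) ^ 2)) :
    ∀ m : ℕ, (m : ℝ) ≥ Real.logb 2 (Real.logb 2 (1 / ε)) → F m > 1 - ε := by
  -- key invariant
  have key : ∀ n : ℕ, 0 < F n ∧ F n ≤ 1 ∧ 1 - F n ≤ (1/2 : ℝ) ^ (2 ^ n) * F n := by
    intro n
    induction n with
    | zero =>
      refine ⟨by linarith, h1, ?_⟩
      simp only [pow_zero, pow_one]
      linarith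
    | succ n ih =>
      obtain ⟨hpos, hle1, hb⟩ := ih
      set t : ℝ := (1/2 : ℝ) ^ (2 ^ n) with ht
      have ht0 : 0 < t := by positivity
      have hD : 0 < (F n) ^ 2 + (1 - F n) ^ 2 := by positivity
      have h1F : 0 ≤ 1 - F n := by linarith
      have hsq : (1 - F n) ^ 2 ≤ (t * F n) ^ 2 := by
        apply pow_le_pow_left₀ h1F hb
      have ht2 : (1/2 : ℝ) ^ (2 ^ (n+1)) = t ^ 2 := by
        rw [ht, ← pow_mul, pow_succ]
      rw [hrec n]
      refine ⟨by positivity, ?_, ?_⟩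
      · rw [div_le_one hD]; nlinarith [sq_nonneg (1 - F n)]
      · rw [ht2]
        have h' : 1 - F n ^ 2 / (F n ^ 2 + (1 - F n) ^ 2)
            = (1 - F n) ^ 2 / (F n ^ 2 + (1 - F n) ^ 2) := by
          field_simp
          ring
        rw [h', ← mul_div_assoc]
        gcongr
        nlinarith [hsq]
  intro m hm
  -- from the hypothesis, (1/2)^(2^m) ≤ ε
  have hinv : (2 : ℝ) < 1 / ε := by
    rw [lt_div_iff₀ hε0]; linarith
  have hL : (1 : ℝ) < Real.logb 2 (1 / ε) := by
    rw [Real.lt_logb_iff_rpow_lt (by norm_num) (by positivity)]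
    simpa using hinv
  have hL0 : (0 : ℝ) < Real.logb 2 (1 / ε) := by linarith
  have step1 : Real.logb 2 (1 / ε) ≤ (2 : ℝ) ^ (m : ℝ) := by
    rw [← Real.rpow_logb (show (0:ℝ) < 2 by norm_num) (by norm_num) hL0]
    apply Real.rpow_le_rpow_of_exponent_le (by norm_num)
    simpa using hm
  have step2 : 1 / ε ≤ (2 : ℝ) ^ ((2 : ℝ) ^ (m : ℝ)) := by
    rw [← Real.rpow_logb (show (0:ℝ) < 2 by norm_num) (by norm_num)
      (show (0:ℝ) < 1/ε by positivity)]
    exact Real.rpow_le_rpow_of_exponent_le (by norm_num) step1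
  have hcast : (2 : ℝ) ^ ((2 : ℝ) ^ (m : ℝ)) = (2 : ℝ) ^ (2 ^ m : ℕ) := by
    have e1 : (2 : ℝ) ^ (m : ℝ) = ((2 ^ m : ℕ) : ℝ) := by
      rw [Real.rpow_natCast]; push_cast; ring
    rw [e1, Real.rpow_natCast]
  have step3 : 1 / ε ≤ (2 : ℝ) ^ (2 ^ m : ℕ) := hcast ▸ step2
  have htε : (1/2 : ℝ) ^ (2 ^ m) ≤ ε := by
    have h2 : (0:ℝ) < (2 : ℝ) ^ (2 ^ m : ℕ) := by positivity
    rw [div_pow, one_pow, div_le_iff₀ h2]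
    rw [div_le_iff₀ hε0] at step3
    linarith
  obtain ⟨hpos, hle1, hb⟩ := key m
  have ht0 : (0:ℝ) < (1/2 : ℝ) ^ (2 ^ m) := by positivity
  set t : ℝ := (1/2 : ℝ) ^ (2 ^ m)
  -- 1 - F m ≤ t * F m with F m ≤ 1, 0 < t ≤ ε gives 1 - F m < ε
  nlinarith [mul_pos ht0 ht0, mul_le_mul_of_nonneg_left hle1 ht0.le]
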